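/- Let q be odd, n ≥ 1, and 0 ≤ r ≤ n. For any two nonzero vectors v, w ∈ F_q^n whose first coordinates are zero, the number of n×n skew-symmetric matrices over F_q of rank r whose first row is v equals the number of n×n skew-symmetric matrices over F_q of rank r whose first row is w. -/

import Mathlib

open Matrix

private lemma exists_dual {F : Type} [Field F] [DecidableEq F] {n : ℕ} (v w : Fin n → F)
    (hv : v ≠ 0) (hw : w ≠ 0) : ∃ u : Fin n → F, u ⬝ᵥ v = 1 ∧ u ⬝ᵥ w ≠ 0 := by
  obtain ⟨i, hi⟩ := Function.ne_iff.mp hv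
  obtain ⟨j, hj⟩ := Function.ne_iff.mp hw
  simp only [Pi.zero_apply] at hi hj
  by_cases hwi : w i ≠ 0
  · refine ⟨fun k => if k = i then (v i)⁻¹ else 0, ?_, ?_⟩ <;>
      simp [dotProduct, ite_mul, zero_mul, Finset.sum_ite_eq', inv_mul_cancel₀ hi, hi, hwi]
  · push_neg at hwi
    by_cases hvj : v j ≠ 0
    · refine ⟨fun k => if k = j then (v j)⁻¹ else 0, ?_, ?_⟩ <;>
        simp [dotProduct, ite_mul, zero_mul, Finset.sum_ite_eq', inv_mul_cancel₀ hvj, hvj, hj]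
    · push_neg at hvj
      have hij : i ≠ j := fun h => hj (h ▸ hwi)
      refine ⟨fun k => if k = i then (v i)⁻¹ else if k = j then (w j)⁻¹ else 0, ?_, ?_⟩
      · rw [dotProduct, Finset.sum_eq_single i]
        · simp [inv_mul_cancel₀ hi]
        · intro b _ hb
          rcases eq_or_ne b j with rfl | hbj
          · simp [hb, hvj]
          · simp [hb, hbj]
        · simp
      · rw [dotProduct, Finset.sum_eq_single j]
        · simp [hij.symm, inv_mul_cancel₀ hj]
        · intro b _ hb
          rcases eq_or_ne b i with rfl | hbi
          · simp [hb, hwi]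
          · simp [hb, hbi]
        · simp

private lemma key_le {F : Type} [Field F] [Fintype F] [DecidableEq F] {n : ℕ} (r : ℕ)
    (i : Fin n) (v : Fin n → F) (Q Q' : Matrix (Fin n) (Fin n) F)
    (h1 : Q * Q' = 1) (h2 : Q' * Q = 1) (hQi : Q i = Pi.single i 1) :
    Nat.card {A : Matrix (Fin n) (Fin n) F // Aᵀ = -A ∧ A.rank = r ∧ A i = v} ≤
      Nat.card {A : Matrix (Fin n) (Fin n) F // Aᵀ = -A ∧ A.rank = r ∧ A i = Q *ᵥ v} := by
  have hdetQ : IsUnit Q.det := IsUnit.of_mul_eq_one Q'.det (by rw [← det_mul, h1, det_one])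
  have hdetQT : IsUnit Qᵀ.det := by rwa [det_transpose]
  have hrow : ∀ X : Matrix (Fin n) (Fin n) F, (Q * X) i = X i := by
    intro X
    funext j
    simp [mul_apply, hQi, Pi.single_apply, ite_mul, zero_mul, one_mul, Finset.sum_ite_eq,
      Finset.sum_ite_eq']
  refine Nat.card_le_card_of_injective (fun A => ⟨Q * A.1 * Qᵀ, ?_, ?_, ?_⟩) ?_
  · obtain ⟨A, hA1, hA2, hA3⟩ := A
    simp only [transpose_mul, transpose_transpose, hA1]
    simp [Matrix.mul_assoc, Matrix.mul_neg, Matrix.neg_mul]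
  · obtain ⟨A, hA1, hA2, hA3⟩ := A
    show (Q * A * Qᵀ).rank = r
    rw [rank_mul_eq_left_of_isUnit_det _ _ hdetQT, rank_mul_eq_right_of_isUnit_det _ _ hdetQ, hA2]
  · obtain ⟨A, hA1, hA2, hA3⟩ := A
    show (Q * A * Qᵀ) i = Q *ᵥ v
    rw [Matrix.mul_assoc, hrow]
    funext j
    simp [mul_apply, mulVec, dotProduct, transpose_apply, hA3, mul_comm]
  · rintro ⟨A, _⟩ ⟨B, _⟩ h
    simp only [Subtype.mk.injEq] at h ⊢
    have := congrArg (fun X => Q' * X * Q'ᵀ) h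
    simpa [Matrix.mul_assoc, ← Matrix.mul_assoc Q' Q, h2, ← transpose_mul, h1] using this

theorem stmt9 (F : Type) [Field F] [Fintype F] (q : ℕ) (hq : Fintype.card F = q)
    (hodd : Odd q) (n r : ℕ) (hn : 0 < n) (hr : r ≤ n)
    (v w : Fin n → F) (hv0 : v ⟨0, hn⟩ = 0) (hw0 : w ⟨0, hn⟩ = 0)
    (hv : v ≠ 0) (hw : w ≠ 0) :
    Nat.card {A : Matrix (Fin n) (Fin n) F //
        Aᵀ = -A ∧ A.rank = r ∧ A ⟨0, hn⟩ = v} =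
      Nat.card {A : Matrix (Fin n) (Fin n) F //
        Aᵀ = -A ∧ A.rank = r ∧ A ⟨0, hn⟩ = w} := by
  classical
  obtain ⟨u, huv, huw⟩ := exists_dual v w hv hw
  set t : F := u ⬝ᵥ w with ht
  set M : Matrix (Fin n) (Fin n) F := vecMulVec (w - v) u with hM
  set Q : Matrix (Fin n) (Fin n) F := 1 + M with hQ
  set Q' : Matrix (Fin n) (Fin n) F := 1 - t⁻¹ • M with hQ'
  have hMM : M * M = (t - 1) • M := by
    ext a b
    rw [mul_apply]
    simp only [hM, vecMulVec_apply, Matrix.smul_apply, smul_eq_mul]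
    calc ∑ k, (w - v) a * u k * ((w - v) k * u b)
        = ∑ k, (w - v) a * u b * (u k * (w - v) k) := by
          refine Finset.sum_congr rfl fun k _ => by ring
      _ = (w - v) a * u b * ∑ k, u k * (w - v) k := by rw [← Finset.mul_sum]
      _ = (w - v) a * u b * (t - 1) := by
          congr 1
          have : ∑ k, u k * (w - v) k = u ⬝ᵥ w - u ⬝ᵥ v := by
            simp [dotProduct, mul_sub, Finset.sum_sub_distrib]
          rw [this, huv, ht]
      _ = (t - 1) * ((w - v) a * u b) := by ring
  have hc : t⁻¹ * (t - 1) = 1 - t⁻¹ := by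
    rw [mul_sub, inv_mul_cancel₀ huw, mul_one]
  have hfin : (1 : Matrix (Fin n) (Fin n) F) + M - (t⁻¹ • M + t⁻¹ • (M * M)) = 1 := by
    rw [hMM, smul_smul, hc, sub_smul, one_smul]
    abel
  have h1 : Q * Q' = 1 := by
    have e1 : Q * Q' = 1 + M - (t⁻¹ • M + t⁻¹ • (M * M)) := by
      simp only [hQ, hQ', Matrix.mul_sub, Matrix.sub_mul, Matrix.add_mul, Matrix.mul_add,
        Matrix.one_mul, Matrix.mul_one, Matrix.mul_smul, Matrix.smul_mul, smul_add, smul_sub]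
      try abel
    rw [e1, hfin]
  have h2 : Q' * Q = 1 := by
    have e2 : Q' * Q = 1 + M - (t⁻¹ • M + t⁻¹ • (M * M)) := by
      simp only [hQ, hQ', Matrix.mul_sub, Matrix.sub_mul, Matrix.add_mul, Matrix.mul_add,
        Matrix.one_mul, Matrix.mul_one, Matrix.mul_smul, Matrix.smul_mul, smul_add, smul_sub]
      try abel
    rw [e2, hfin]
  have hwv0 : (w - v) ⟨0, hn⟩ = 0 := by simp [hv0, hw0]
  have hQ0 : Q ⟨0, hn⟩ = Pi.single ⟨0, hn⟩ 1 := by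
    funext j
    simp [hQ, hM, one_apply, vecMulVec_apply, hwv0, Pi.single_apply, eq_comm]
  have hQ'0 : Q' ⟨0, hn⟩ = Pi.single ⟨0, hn⟩ 1 := by
    funext j
    simp [hQ', hM, one_apply, vecMulVec_apply, hwv0, Pi.single_apply, eq_comm]
  have hMv : M *ᵥ v = w - v := by
    funext j
    show ∑ k, M j k * v k = (w - v) j
    simp only [hM, vecMulVec_apply]
    calc ∑ k, (w - v) j * u k * v k
        = ∑ k, (w - v) j * (u k * v k) := by
          refine Finset.sum_congr rfl fun k _ => by ring
      _ = (w - v) j * ∑ k, u k * v k := by rw [← Finset.mul_sum]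
      _ = (w - v) j := by rw [show ∑ k, u k * v k = u ⬝ᵥ v from rfl, huv, mul_one]
  have hQv : Q *ᵥ v = w := by
    rw [hQ, add_mulVec, one_mulVec, hMv]
    abel
  have hQ'w : Q' *ᵥ w = v := by
    calc Q' *ᵥ w = Q' *ᵥ (Q *ᵥ v) := by rw [hQv]
      _ = (Q' * Q) *ᵥ v := by rw [mulVec_mulVec]
      _ = v := by rw [h2, one_mulVec]
  refine le_antisymm ?_ ?_
  · have := key_le r ⟨0, hn⟩ v Q Q' h1 h2 hQ0
    rwa [hQv] at this
  · have := key_le r ⟨0, hn⟩ w Q' Q h2 h1 hQ'0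
    rwa [hQ'w] at this
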